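/- The only graph automorphism of the graph 12⁸₁ is the identity. -/

import Mathlib

/-- The vertices of the graph `12⁸₁`. -/
inductive V81 : Type
  | a1 | a2 | a3 | b1 | b2 | b3 | v | w
  deriving DecidableEq

open V81 in
instance instFintypeV81 : Fintype V81 where
  elems := {a1, a2, a3, b1, b2, b3, v, w}
  complete := by intro x; cases x <;> first | decide | simp

open V81 in
/-- The graph `12⁸₁`: the 6-cycle `a₁a₂a₃b₁b₂b₃a₁`, the chords `a₂b₂`, `a₃b₃`, the
edge `a₁b₂`, the edges `va₁`, `vb₁`, and the pendant edge `wa₂` (12 edges in all;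
the chord `a₁b₁` of the Möbius ladder arises through the degree-2 vertex `v`). -/
def graph1281 : SimpleGraph V81 :=
  SimpleGraph.fromRel (fun x y => (x, y) ∈
    [(a1, a2), (a2, a3), (a3, b1), (b1, b2), (b2, b3), (b3, a1),
     (a2, b2), (a3, b3), (a1, b2), (v, a1), (v, b1), (w, a2)])

instance : DecidableRel graph1281.Adj := fun x y =>
  decidable_of_iff _ (SimpleGraph.fromRel_adj _ x y).symm

open V81

/-- The only graph automorphism of `12⁸₁` is the identity. -/
theorem stmt12 (φ : graph1281 ≃g graph1281) : ∀ x, φ x = x := by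
  have hdeg : ∀ x, graph1281.degree (φ x) = graph1281.degree x := fun x => by
    rw [← SimpleGraph.card_neighborSet_eq_degree, ← SimpleGraph.card_neighborSet_eq_degree]
    exact Fintype.card_congr (φ.mapNeighborSet x).symm
  have hw : φ w = w := by
    have h : graph1281.degree (φ w) = 1 := by rw [hdeg]; decide
    revert h; generalize φ w = z; revert z; decide
  have hv : φ v = v := by
    have h : graph1281.degree (φ v) = 2 := by rw [hdeg]; decide
    revert h; generalize φ v = z; revert z; decide
  have ha2 : φ a2 = a2 := by
    have h : graph1281.Adj w (φ a2) := by
      rw [← hw]; exact φ.map_adj_iff.mpr (by decide)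
    revert h; generalize φ a2 = z; revert z; decide
  have ha1 : φ a1 = a1 := by
    have h : graph1281.Adj v (φ a1) := by
      rw [← hv]; exact φ.map_adj_iff.mpr (by decide)
    have h2 : graph1281.Adj a2 (φ a1) := by
      rw [← ha2]; exact φ.map_adj_iff.mpr (by decide)
    revert h h2; generalize φ a1 = z; revert z; decide
  have hb1 : φ b1 = b1 := by
    have h : graph1281.Adj v (φ b1) := by
      rw [← hv]; exact φ.map_adj_iff.mpr (by decide)
    have h2 : φ b1 ≠ a1 := by rw [← ha1]; exact fun e => by cases φ.injective e
    revert h h2; generalize φ b1 = z; revert z; decide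
  have hb2 : φ b2 = b2 := by
    have h : graph1281.degree (φ b2) = 4 := by rw [hdeg]; decide
    have h2 : φ b2 ≠ a2 := by rw [← ha2]; exact fun e => by cases φ.injective e
    have h3 : φ b2 ≠ a1 := by rw [← ha1]; exact fun e => by cases φ.injective e
    revert h h2 h3; generalize φ b2 = z; revert z; decide
  have ha3 : φ a3 = a3 := by
    have h : graph1281.Adj a2 (φ a3) := by
      rw [← ha2]; exact φ.map_adj_iff.mpr (by decide)
    have h2 : graph1281.Adj b1 (φ a3) := by
      rw [← hb1]; exact φ.map_adj_iff.mpr (by decide)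
    have h3 : φ a3 ≠ b2 := by rw [← hb2]; exact fun e => by cases φ.injective e
    revert h h2 h3; generalize φ a3 = z; revert z; decide
  have hb3 : φ b3 = b3 := by
    have h : graph1281.Adj b2 (φ b3) := by
      rw [← hb2]; exact φ.map_adj_iff.mpr (by decide)
    have h2 : φ b3 ≠ a1 := by rw [← ha1]; exact fun e => by cases φ.injective e
    have h3 : φ b3 ≠ a2 := by rw [← ha2]; exact fun e => by cases φ.injective e
    have h4 : φ b3 ≠ b1 := by rw [← hb1]; exact fun e => by cases φ.injective e
    revert h h2 h3 h4; generalize φ b3 = z; revert z; decide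
  intro x; cases x <;> assumption
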